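/- Let f : ℝⁿ → ℝ be differentiable and μ-strongly star-convex with constant μ ≥ 0 and global minimizer ω* ∈ ℝⁿ, and suppose the gradient of f vanishes at ω*. Then for all λ ∈ [0,1] and all ω ∈ ℝⁿ, setting ω̃ = (1−λ)ω* + λω, it holds that f(ω*) ≤ f(ω̃) − (μ/2)‖ω* − ω̃‖². -/

import Mathlib

open RealInnerProductSpace

/-- Lemma 1 (Eq. 7) direction: strong star-convexity (gradient form) with vanishing
gradient at the minimizer implies the quadratic-growth inequality along segments. -/
theorem strong_star_convex_imp_eq7 {n : ℕ} (f : EuclideanSpace ℝ (Fin n) → ℝ) (μ : ℝ)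
    (hμ : 0 ≤ μ) (hdiff : Differentiable ℝ f) (ωs : EuclideanSpace ℝ (Fin n))
    (hmin : ∀ ω, f ωs ≤ f ω)
    (hssc : ∀ ω : EuclideanSpace ℝ (Fin n),
      f ω + ⟪gradient f ω, ωs - ω⟫ + μ / 2 * ‖ωs - ω‖ ^ 2 ≤ f ωs)
    (hgrad : gradient f ωs = 0) :
    ∀ lam : ℝ, lam ∈ Set.Icc (0 : ℝ) 1 → ∀ ω : EuclideanSpace ℝ (Fin n),
      f ωs ≤ f ((1 - lam) • ωs + lam • ω)
        - μ / 2 * ‖ωs - ((1 - lam) • ωs + lam • ω)‖ ^ 2 := by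
  intro lam hlam ω
  obtain ⟨h0, h1⟩ := hlam
  set v : EuclideanSpace ℝ (Fin n) := ω - ωs with hv
  have hpt : ∀ t : ℝ, ωs + t • v = (1 - t) • ωs + t • ω := by
    intro t; simp only [hv]; module
  have hnorm : ∀ t : ℝ, ‖ωs - (ωs + t • v)‖ ^ 2 = t ^ 2 * ‖v‖ ^ 2 := by
    intro t
    have : ωs - (ωs + t • v) = -(t • v) := by module
    rw [this, norm_neg, norm_smul]
    simp [mul_pow, sq_abs]
  rw [← hpt lam, hnorm lam]
  -- derivative along the line
  set g : ℝ → ℝ := fun t => f (ωs + t • v) - f ωs - μ / 2 * t ^ 2 * ‖v‖ ^ 2 with hgdef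
  set G : ℝ → ℝ := fun t => ⟪gradient f (ωs + t • v), v⟫ - μ * t * ‖v‖ ^ 2 with hGdef
  have hline : ∀ t : ℝ, HasDerivAt (fun s : ℝ => ωs + s • v) v t := by
    intro t
    simpa using ((hasDerivAt_id t).smul_const v).const_add ωs
  have hfg : ∀ t : ℝ, HasDerivAt (fun s => f (ωs + s • v))
      ⟪gradient f (ωs + t • v), v⟫ t := by
    intro t
    have hgr := (hdiff (ωs + t • v)).hasGradientAt
    have := hgr.hasFDerivAt.comp_hasDerivAt t (hline t)
    simp at this ⊢
    exact this
  have hg : ∀ t : ℝ, HasDerivAt g (G t) t := by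
    intro t
    have h2 : HasDerivAt (fun s : ℝ => μ / 2 * s ^ 2 * ‖v‖ ^ 2) (μ * t * ‖v‖ ^ 2) t := by
      have : HasDerivAt (fun s : ℝ => s ^ 2) (2 * t) t := by
        simpa using hasDerivAt_pow 2 t
      have := (this.const_mul (μ / 2)).mul_const (‖v‖ ^ 2)
      exact this.congr_deriv (by ring)
    have h3 := ((hfg t).sub_const (f ωs)).sub h2
    simp [hgdef, hGdef] at h3 ⊢
    exact h3
  -- key inequality from star convexity
  have hkey : ∀ t : ℝ, 0 < t → g t ≤ t * G t := by
    intro t ht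
    have h := hssc (ωs + t • v)
    have e1 : ωs - (ωs + t • v) = -(t • v) := by module
    rw [e1] at h
    have e2 : ⟪gradient f (ωs + t • v), -(t • v)⟫
        = -(t * ⟪gradient f (ωs + t • v), v⟫) := by
      rw [inner_neg_right, real_inner_smul_right]
    rw [e2] at h
    have e3 : ‖-(t • v)‖ ^ 2 = t ^ 2 * ‖v‖ ^ 2 := by
      rw [norm_neg, norm_smul]; simp [mul_pow, sq_abs]
    rw [e3] at h
    simp only [hgdef, hGdef]
    nlinarith [h]
  rcases eq_or_lt_of_le h0 with rfl | hpos
  · simp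
  -- ψ := g / id is monotone on (0, ∞) and tends to 0 at 0⁺
  set ψ : ℝ → ℝ := fun t => g t / t with hψdef
  have hψderiv : ∀ t ∈ Set.Ioi (0 : ℝ), HasDerivAt ψ ((G t * t - g t * 1) / t ^ 2) t := by
    intro t ht
    exact (hg t).div (hasDerivAt_id t) (ne_of_gt ht)
  have hmono : MonotoneOn ψ (Set.Ioi (0 : ℝ)) := by
    apply monotoneOn_of_deriv_nonneg (convex_Ioi 0)
    · exact fun t ht => ((hψderiv t ht).continuousAt).continuousWithinAt
    · intro t ht
      rw [interior_Ioi] at ht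
      exact ((hψderiv t ht).differentiableAt).differentiableWithinAt
    · intro t ht
      rw [interior_Ioi] at ht
      rw [(hψderiv t ht).deriv]
      have := hkey t ht
      have ht' : (0:ℝ) < t := ht
      have ht2 : (0:ℝ) < t ^ 2 := by positivity
      apply div_nonneg _ (le_of_lt ht2)
      nlinarith
  have hg0 : g 0 = 0 := by simp [hgdef]
  have hG0 : G 0 = 0 := by simp only [hGdef, zero_smul, add_zero, hgrad]; simp
  have htend : Filter.Tendsto ψ (nhdsWithin 0 (Set.Ioi 0)) (nhds 0) := by
    have := hasDerivAt_iff_tendsto_slope.mp (hg 0)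
    rw [hG0] at this
    have hsub : nhdsWithin (0:ℝ) (Set.Ioi 0) ≤ nhdsWithin 0 {(0:ℝ)}ᶜ :=
      nhdsWithin_mono 0 (fun x hx => ne_of_gt hx)
    have := this.mono_left hsub
    refine this.congr' ?_
    filter_upwards [self_mem_nhdsWithin] with t ht
    simp [slope, hg0, hψdef, div_eq_inv_mul]
  have hfinal : 0 ≤ ψ lam := by
    refine le_of_tendsto htend ?_
    filter_upwards [self_mem_nhdsWithin, Ioo_mem_nhdsGT_of_mem (Set.mem_Ico.mpr ⟨le_refl 0, hpos⟩)] with t ht hto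
    exact hmono ht hpos hto.2.le
  have : 0 ≤ g lam := by
    have := mul_nonneg hpos.le hfinal
    rw [hψdef] at this
    simpa [mul_div_assoc, mul_div_cancel₀ _ (ne_of_gt hpos)] using this
  simp only [hgdef] at this
  linarith
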